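/- The two-variable generating function V(x,y) = sum_{n,k ≥ 1} V_{n,k} x^n y^k of valleyless sequences of length n with maximum entry k satisfies the functional equation V(x,y) = xy/(1-x) + y·V(x,y)/(1-x)^2, and hence V(x,y) = xy / (1 - x - y/(1-x)). -/

import Mathlib

open MvPowerSeries

/-- A sequence of positive integers is valleyless if no entry is strictly below some
earlier entry and some later entry. -/
def SeqValleyless {n : ℕ} (s : Fin n → ℕ) : Prop :=
  ∀ i j k : Fin n, i < j → j < k → min (s i) (s k) ≤ s j

/-- `Vnk n k`: the number of valleyless sequences of length `n` of positive integers with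
maximum entry exactly `k`. -/
noncomputable def Vnk (n k : ℕ) : ℕ :=
  Nat.card {s : Fin n → ℕ // (∀ i, 0 < s i) ∧ SeqValleyless s ∧
    (∀ i, s i ≤ k) ∧ (∃ i, s i = k)}


lemma sm_add_le {n m : ℕ} {f : Fin n → Fin m} (hf : StrictMono f) :
    ∀ (d : ℕ) (i j : Fin n), (i : ℕ) + d = (j : ℕ) → (f i : ℕ) + d ≤ (f j : ℕ) := by
  intro d
  induction d with
  | zero => intro i j h; have : i = j := Fin.ext (by omega); simp [this]
  | succ d ih =>
    intro i j h
    have hj1 : 0 < (j : ℕ) := by omega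
    set j' : Fin n := ⟨(j : ℕ) - 1, by omega⟩ with hj'
    have h1 := ih i j' (show (i : ℕ) + d = (j : ℕ) - 1 by omega)
    have h2 : f j' < f j := hf (show ((j : ℕ) - 1) < (j : ℕ) by omega)
    rw [Fin.lt_def] at h2
    omega

lemma card_mono_bdd (n B : ℕ) :
    Nat.card {w : Fin n → ℕ // Monotone w ∧ ∀ i, w i ≤ B} = (n + B).choose n := by
  have hsm : ∀ w : {w : Fin n → ℕ // Monotone w ∧ ∀ i, w i ≤ B},
      StrictMono (fun i : Fin n =>
        (⟨w.1 i + i, by have := w.2.2 i; have := i.2; omega⟩ : Fin (n + B))) := by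
    intro w i j hij
    have h1 : w.1 i ≤ w.1 j := w.2.1 hij.le
    rw [Fin.lt_def] at hij ⊢
    simp only
    omega
  have e : {w : Fin n → ℕ // Monotone w ∧ ∀ i, w i ≤ B} ≃
      {A : Finset (Fin (n + B)) // A.card = n} := by
    refine
      { toFun := fun w => ⟨Finset.image
          (fun i : Fin n => (⟨w.1 i + i, by have := w.2.2 i; have := i.2; omega⟩ : Fin (n + B)))
          Finset.univ, ?_⟩
        invFun := fun A => ⟨fun i => ((A.1.orderEmbOfFin A.2) i : ℕ) - i, ?_, ?_⟩
        left_inv := ?_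
        right_inv := ?_ }
    · rw [Finset.card_image_of_injective _ (hsm _).injective, Finset.card_univ, Fintype.card_fin]
    · intro i j hij
      have h := sm_add_le (A.1.orderEmbOfFin A.2).strictMono ((j : ℕ) - (i : ℕ)) i j
        (by rw [Fin.le_def] at hij; omega)
      simp only
      omega
    · intro i
      have h := sm_add_le (A.1.orderEmbOfFin A.2).strictMono ((n - 1) - (i : ℕ)) i
        ⟨n - 1, by have := i.2; omega⟩ (by simp; have := i.2; omega)
      have h2 : ((A.1.orderEmbOfFin A.2) ⟨n - 1, by have := i.2; omega⟩ : ℕ) < n + B :=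
        Fin.is_lt _
      have h3 := i.2
      change ((A.1.orderEmbOfFin A.2) i : ℕ) - (i : ℕ) ≤ B
      omega
    · intro w
      apply Subtype.ext
      funext i
      have key := Finset.orderEmbOfFin_unique
        (s := Finset.image
          (fun i : Fin n => (⟨w.1 i + i, by have := w.2.2 i; have := i.2; omega⟩ : Fin (n + B)))
          Finset.univ)
        (f := fun i : Fin n =>
          (⟨w.1 i + i, by have := w.2.2 i; have := i.2; omega⟩ : Fin (n + B)))
        (by rw [Finset.card_image_of_injective _ (hsm w).injective, Finset.card_univ,
              Fintype.card_fin])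
        (fun x => Finset.mem_image_of_mem _ (Finset.mem_univ x)) (hsm w)
      simp only [← key]
      omega
    · intro A
      apply Subtype.ext
      have hge : ∀ i : Fin n, (i : ℕ) ≤ ((A.1.orderEmbOfFin A.2) i : ℕ) := by
        intro i
        have h := sm_add_le (A.1.orderEmbOfFin A.2).strictMono (i : ℕ) ⟨0, by have := i.2; omega⟩
          i (by simp)
        omega
      have hfun : (fun i : Fin n =>
          (⟨(((A.1.orderEmbOfFin A.2) i : ℕ) - i) + i, by
            have := ((A.1.orderEmbOfFin A.2) i).2; have := i.2; omega⟩ : Fin (n + B))) =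
          fun i => (A.1.orderEmbOfFin A.2) i := by
        funext i
        exact Fin.ext (by simp [Nat.sub_add_cancel (hge i)])
      simp only
      rw [hfun]
      ext x
      simp only [Finset.mem_image, Finset.mem_univ, true_and]
      constructor
      · rintro ⟨i, rfl⟩
        exact Finset.orderEmbOfFin_mem A.1 A.2 i
      · intro hx
        have : x ∈ Set.range (A.1.orderEmbOfFin A.2) := by
          rw [Finset.range_orderEmbOfFin]
          exact hx
        obtain ⟨i, hi⟩ := this
        exact ⟨i, hi⟩
  rw [Nat.card_congr e, Nat.card_eq_fintype_card, Fintype.card_finset_len, Fintype.card_fin]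

lemma unimodal_valleyless {m : ℕ} (s : Fin m → ℕ) (t : ℕ)
    (h1 : ∀ i j : Fin m, (i : ℕ) ≤ j → (j : ℕ) ≤ t → s i ≤ s j)
    (h2 : ∀ i j : Fin m, t ≤ (i : ℕ) → (i : ℕ) ≤ j → s j ≤ s i) : SeqValleyless s := by
  intro i j l hij hjl
  rcases le_or_gt (j : ℕ) t with h | h
  · exact le_trans (min_le_left _ _) (h1 i j (by rw [Fin.lt_def] at hij; omega) h)
  · exact le_trans (min_le_right _ _) (h2 j l h.le (by rw [Fin.lt_def] at hjl; omega))

lemma inc_before {m K : ℕ} {s : Fin m → ℕ} (hv : SeqValleyless s) (hbd : ∀ i, s i ≤ K)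
    {t : Fin m} (ht : s t = K) :
    ∀ i j : Fin m, (i : ℕ) ≤ j → (j : ℕ) ≤ (t : ℕ) → s i ≤ s j := by
  intro i j hij hjt
  rcases eq_or_lt_of_le hij with h | h
  · exact le_of_eq (congrArg s (Fin.ext h))
  rcases eq_or_lt_of_le hjt with h2 | h2
  · have hjt' : j = t := Fin.ext h2
    rw [hjt', ht]; exact hbd i
  · have hm := hv i j t (by rwa [Fin.lt_def]) (by rwa [Fin.lt_def])
    rw [ht] at hm
    rwa [min_eq_left (hbd i)] at hm

lemma dec_after {m K : ℕ} {s : Fin m → ℕ} (hv : SeqValleyless s) (hbd : ∀ i, s i ≤ K)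
    {t : Fin m} (ht : s t = K) :
    ∀ i j : Fin m, (t : ℕ) ≤ (i : ℕ) → (i : ℕ) ≤ j → s j ≤ s i := by
  intro i j hti hij
  rcases eq_or_lt_of_le hij with h | h
  · exact le_of_eq (congrArg s (Fin.ext h.symm))
  rcases eq_or_lt_of_le hti with h2 | h2
  · have hit : i = t := Fin.ext h2.symm
    rw [hit, ht]; exact hbd j
  · have hm := hv t i j (by rwa [Fin.lt_def]) (by rwa [Fin.lt_def])
    rw [ht] at hm
    rwa [min_eq_right (hbd j)] at hm

/-- length of the maximal prefix with values `≤ k` (for monotone `w`). -/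
def tw {n : ℕ} (k : ℕ) (w : Fin n → ℕ) : ℕ :=
  (Finset.univ.filter fun i : Fin n => w i ≤ k).card

lemma tw_le {n k : ℕ} (w : Fin n → ℕ) : tw k w ≤ n :=
  le_trans (Finset.card_filter_le _ _) (by simp)

lemma tw_lt_iff {n k : ℕ} {w : Fin n → ℕ} (hw : Monotone w) (i : Fin n) :
    (i : ℕ) < tw k w ↔ w i ≤ k := by
  constructor
  · intro h
    by_contra hc
    push_neg at hc
    have hsub : (Finset.univ.filter fun j : Fin n => w j ≤ k) ⊆ Finset.Iio i := by
      intro j hj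
      simp only [Finset.mem_filter] at hj
      rw [Finset.mem_Iio]
      by_contra hji
      push_neg at hji
      exact absurd (le_trans (hw hji) hj.2) (by omega)
    have hle := Finset.card_le_card hsub
    rw [Fin.card_Iio] at hle
    unfold tw at h
    omega
  · intro h
    have hsub : Finset.Iic i ⊆ (Finset.univ.filter fun j : Fin n => w j ≤ k) := by
      intro j hj
      rw [Finset.mem_Iic] at hj
      simp only [Finset.mem_filter, Finset.mem_univ, true_and]
      exact le_trans (hw hj) h
    have hle := Finset.card_le_card hsub
    rw [Fin.card_Iic] at hle
    unfold tw
    omega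

def gfun (n k t : ℕ) (w : Fin n → ℕ) : Fin (n + 1) → ℕ := fun j =>
  if h : (j : ℕ) < t ∧ (j : ℕ) < n then w ⟨j, h.2⟩ + 1
  else if (j : ℕ) = t then k + 1
  else if h2 : (j : ℕ) - 1 < n then 2 * k + 1 - w ⟨(j : ℕ) - 1, h2⟩
  else 0

lemma gfun_lt {n k t : ℕ} {w : Fin n → ℕ} {j : Fin (n + 1)} (hj : (j : ℕ) < t) (hjn : (j : ℕ) < n) :
    gfun n k t w j = w ⟨j, hjn⟩ + 1 := by
  unfold gfun; rw [dif_pos ⟨hj, hjn⟩]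

lemma gfun_eq {n k t : ℕ} {w : Fin n → ℕ} {j : Fin (n + 1)} (hj : (j : ℕ) = t) :
    gfun n k t w j = k + 1 := by
  unfold gfun
  rw [dif_neg (fun hh => absurd hh.1 (by omega)), if_pos hj]

lemma gfun_gt {n k t : ℕ} {w : Fin n → ℕ} {j : Fin (n + 1)} (hj : t < (j : ℕ)) :
    gfun n k t w j = 2 * k + 1 - w ⟨(j : ℕ) - 1, by have := j.2; omega⟩ := by
  unfold gfun
  rw [dif_neg (fun hh => absurd hh.1 (by omega)), if_neg (by omega),
    dif_pos (show (j : ℕ) - 1 < n by have := j.2; omega)]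

def ffun (n k t : ℕ) (s : Fin (n + 1) → ℕ) : Fin n → ℕ := fun i =>
  if (i : ℕ) < t then s ⟨i, by have := i.2; omega⟩ - 1
  else 2 * k + 1 - s ⟨(i : ℕ) + 1, by have := i.2; omega⟩

lemma gfun_facts {n k : ℕ} {w : Fin n → ℕ} (hm : Monotone w) (hb : ∀ i, w i ≤ 2 * k) :
    (∀ i, 0 < gfun n k (tw k w) w i) ∧ SeqValleyless (gfun n k (tw k w) w) ∧
    (∀ i, gfun n k (tw k w) w i ≤ k + 1) ∧ (∃ i, gfun n k (tw k w) w i = k + 1) ∧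
    (∀ j : Fin (n + 1), tw k w < (j : ℕ) → gfun n k (tw k w) w j ≤ k) := by
  set t := tw k w with htdef
  have htn : t ≤ n := tw_le w
  have hlo : ∀ (j : Fin (n + 1)), (j : ℕ) < t → ∃ hpf : (j : ℕ) < n,
      gfun n k t w j = w ⟨(j : ℕ), hpf⟩ + 1 ∧ w ⟨(j : ℕ), hpf⟩ ≤ k := by
    intro j hj
    have hpf : (j : ℕ) < n := by omega
    exact ⟨hpf, gfun_lt hj hpf, (tw_lt_iff hm ⟨(j : ℕ), hpf⟩).mp hj⟩
  have hhi : ∀ (j : Fin (n + 1)), t < (j : ℕ) → ∃ hpf : (j : ℕ) - 1 < n,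
      gfun n k t w j = 2 * k + 1 - w ⟨(j : ℕ) - 1, hpf⟩ ∧
      k + 1 ≤ w ⟨(j : ℕ) - 1, hpf⟩ ∧ w ⟨(j : ℕ) - 1, hpf⟩ ≤ 2 * k := by
    intro j hj
    have hpf : (j : ℕ) - 1 < n := by have := j.2; omega
    refine ⟨hpf, gfun_gt hj, ?_, hb _⟩
    by_contra hc
    push_neg at hc
    have h5 : ((j : ℕ) - 1) < t := (tw_lt_iff hm ⟨(j : ℕ) - 1, hpf⟩).mpr (by omega)
    omega
  have hgt_le : ∀ j : Fin (n + 1), t < (j : ℕ) → gfun n k t w j ≤ k := by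
    intro j hj
    obtain ⟨hpf, e1, b1, b2⟩ := hhi j hj
    omega
  have h1 : ∀ i j : Fin (n + 1), (i : ℕ) ≤ j → (j : ℕ) ≤ t →
      gfun n k t w i ≤ gfun n k t w j := by
    intro i j hij hjt
    rcases lt_or_eq_of_le hjt with hj | hj
    · have hi : (i : ℕ) < t := by omega
      obtain ⟨pfi, e1, b1⟩ := hlo i hi
      obtain ⟨pfj, e2, b2⟩ := hlo j hj
      have hmono : w ⟨(i : ℕ), pfi⟩ ≤ w ⟨(j : ℕ), pfj⟩ := hm (by rw [Fin.mk_le_mk]; omega)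
      omega
    · rw [gfun_eq hj]
      rcases lt_or_eq_of_le hij with hi | hi
      · obtain ⟨pfi, e1, b1⟩ := hlo i (by omega)
        omega
      · rw [gfun_eq (by omega)]
  have h2 : ∀ i j : Fin (n + 1), t ≤ (i : ℕ) → (i : ℕ) ≤ j →
      gfun n k t w j ≤ gfun n k t w i := by
    intro i j hti hij
    rcases lt_or_eq_of_le hti with hi | hi
    · obtain ⟨pfi, e1, b1, c1⟩ := hhi i hi
      obtain ⟨pfj, e2, b2, c2⟩ := hhi j (by omega)
      have hmono : w ⟨(i : ℕ) - 1, pfi⟩ ≤ w ⟨(j : ℕ) - 1, pfj⟩ :=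
        hm (by rw [Fin.mk_le_mk]; omega)
      omega
    · rw [gfun_eq hi.symm]
      rcases lt_or_eq_of_le hij with hj | hj
      · exact le_trans (hgt_le j (by omega)) (by omega)
      · rw [gfun_eq (by omega)]
  refine ⟨?_, unimodal_valleyless _ t h1 h2, ?_, ⟨⟨t, by omega⟩, gfun_eq rfl⟩, hgt_le⟩
  · intro j
    rcases Nat.lt_trichotomy (j : ℕ) t with hj | hj | hj
    · obtain ⟨pf, e1, b1⟩ := hlo j hj; omega
    · rw [gfun_eq hj]; omega
    · obtain ⟨pf, e1, b1, c1⟩ := hhi j hj; omega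
  · intro j
    rcases Nat.lt_trichotomy (j : ℕ) t with hj | hj | hj
    · obtain ⟨pf, e1, b1⟩ := hlo j hj; omega
    · rw [gfun_eq hj]
    · obtain ⟨pf, e1, b1, c1⟩ := hhi j hj; omega

lemma Vnk_succ_succ (n k : ℕ) : Vnk (n + 1) (k + 1) = (n + 2 * k).choose n := by
  rw [← card_mono_bdd n (2 * k)]
  unfold Vnk
  refine Nat.card_eq_of_bijective
    (fun w : {w : Fin n → ℕ // Monotone w ∧ ∀ i, w i ≤ 2 * k} =>
      (⟨gfun n k (tw k w.1) w.1, (gfun_facts w.2.1 w.2.2).1, (gfun_facts w.2.1 w.2.2).2.1,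
        (gfun_facts w.2.1 w.2.2).2.2.1, (gfun_facts w.2.1 w.2.2).2.2.2.1⟩ :
        {s : Fin (n + 1) → ℕ // (∀ i, 0 < s i) ∧ SeqValleyless s ∧
          (∀ i, s i ≤ k + 1) ∧ (∃ i, s i = k + 1)})) ⟨?_, ?_⟩ |>.symm
  · -- injective
    intro w w' h
    have hG : gfun n k (tw k w.1) w.1 = gfun n k (tw k w'.1) w'.1 :=
      congrArg Subtype.val h
    set t := tw k w.1 with ht
    set t' := tw k w'.1 with ht'
    have htn : t ≤ n := tw_le _
    have htn' : t' ≤ n := tw_le _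
    have htt : t = t' := by
      by_contra hne
      rcases Nat.lt_or_ge t t' with hlt | hge
      · have hp1 : t' < n + 1 := by omega
        have h1 : gfun n k t w.1 ⟨t', hp1⟩ ≤ k :=
          (gfun_facts w.2.1 w.2.2).2.2.2.2 ⟨t', hp1⟩ hlt
        have h2 : gfun n k t' w'.1 ⟨t', hp1⟩ = k + 1 := gfun_eq rfl
        rw [hG] at h1
        omega
      · have hlt : t' < t := by omega
        have hp1 : t < n + 1 := by omega
        have h1 : gfun n k t' w'.1 ⟨t, hp1⟩ ≤ k :=
          (gfun_facts w'.2.1 w'.2.2).2.2.2.2 ⟨t, hp1⟩ hlt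
        have h2 : gfun n k t w.1 ⟨t, hp1⟩ = k + 1 := gfun_eq rfl
        rw [hG] at h2
        omega
    apply Subtype.ext
    funext i
    have hin : (i : ℕ) < n := i.2
    have hin1 : (i : ℕ) < n + 1 := by omega
    have hin2 : (i : ℕ) + 1 < n + 1 := by omega
    rcases Nat.lt_or_ge (i : ℕ) t with hi | hi
    · have e1 : gfun n k t w.1 ⟨(i : ℕ), hin1⟩ = w.1 i + 1 :=
        gfun_lt (j := ⟨(i : ℕ), hin1⟩) hi hin
      have e2 : gfun n k t' w'.1 ⟨(i : ℕ), hin1⟩ = w'.1 i + 1 :=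
        gfun_lt (j := ⟨(i : ℕ), hin1⟩) (show (i : ℕ) < t' by omega) hin
      have e3 := congrFun hG (⟨(i : ℕ), hin1⟩ : Fin (n + 1))
      omega
    · have e1 : gfun n k t w.1 ⟨(i : ℕ) + 1, hin2⟩ = 2 * k + 1 - w.1 i :=
        gfun_gt (j := ⟨(i : ℕ) + 1, hin2⟩) (show t < (i : ℕ) + 1 by omega)
      have e2 : gfun n k t' w'.1 ⟨(i : ℕ) + 1, hin2⟩ = 2 * k + 1 - w'.1 i :=
        gfun_gt (j := ⟨(i : ℕ) + 1, hin2⟩) (show t' < (i : ℕ) + 1 by omega)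
      have e3 := congrFun hG (⟨(i : ℕ) + 1, hin2⟩ : Fin (n + 1))
      have b1 := w.2.2 i
      have b2 := w'.2.2 i
      omega
  · -- surjective
    rintro ⟨s, hpos, hv, hbd, hex⟩
    have hTne : (Finset.univ.filter fun j : Fin (n + 1) => s j = k + 1).Nonempty := by
      obtain ⟨i, hi⟩ := hex
      exact ⟨i, by simp [hi]⟩
    set tF : Fin (n + 1) := (Finset.univ.filter fun j : Fin (n + 1) => s j = k + 1).max' hTne
      with htF
    set t : ℕ := (tF : ℕ) with htdef
    have htn : t ≤ n := by have := tF.2; omega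
    have hts : s tF = k + 1 :=
      (Finset.mem_filter.mp (Finset.max'_mem _ hTne)).2
    have hgt : ∀ j : Fin (n + 1), t < (j : ℕ) → s j ≤ k := by
      intro j hj
      have hne : s j ≠ k + 1 := by
        intro hc
        have hle : j ≤ tF := Finset.le_max' _ j (by simp [hc])
        rw [Fin.le_def] at hle
        omega
      have := hbd j
      omega
    have hinc := inc_before hv hbd hts
    have hdec := dec_after hv hbd hts
    set w : Fin n → ℕ := ffun n k t s with hw
    have hwlt : ∀ (i : Fin n) (hpf : (i : ℕ) < n + 1), (i : ℕ) < t →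
        w i = s ⟨(i : ℕ), hpf⟩ - 1 := by
      intro i hpf h
      show ffun n k t s i = _
      unfold ffun
      rw [if_pos h]
    have hwge : ∀ (i : Fin n) (hpf : (i : ℕ) + 1 < n + 1), t ≤ (i : ℕ) →
        w i = 2 * k + 1 - s ⟨(i : ℕ) + 1, hpf⟩ ∧ s ⟨(i : ℕ) + 1, hpf⟩ ≤ k := by
      intro i hpf h
      constructor
      · show ffun n k t s i = _
        unfold ffun
        rw [if_neg (show ¬ ((i : ℕ) < t) by omega)]
      · exact hgt ⟨(i : ℕ) + 1, hpf⟩ (show t < (i : ℕ) + 1 by omega)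
    have hwm : Monotone w := by
      intro i j hij
      rw [Fin.le_def] at hij
      have hpi : (i : ℕ) < n + 1 := by have := i.2; omega
      have hpj : (j : ℕ) < n + 1 := by have := j.2; omega
      have hpi2 : (i : ℕ) + 1 < n + 1 := by have := i.2; omega
      have hpj2 : (j : ℕ) + 1 < n + 1 := by have := j.2; omega
      rcases Nat.lt_or_ge (j : ℕ) t with hj | hj
      · have hi : (i : ℕ) < t := by omega
        have e1 := hwlt i hpi hi
        have e2 := hwlt j hpj hj
        have hmono : s ⟨(i : ℕ), hpi⟩ ≤ s ⟨(j : ℕ), hpj⟩ :=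
          hinc ⟨(i : ℕ), hpi⟩ ⟨(j : ℕ), hpj⟩ (show (i : ℕ) ≤ (j : ℕ) by omega)
            (show (j : ℕ) ≤ t by omega)
        have c1 := hpos ⟨(i : ℕ), hpi⟩
        omega
      · obtain ⟨e2, b2⟩ := hwge j hpj2 hj
        rcases Nat.lt_or_ge (i : ℕ) t with hi | hi
        · have e1 := hwlt i hpi hi
          have b1 := hbd ⟨(i : ℕ), hpi⟩
          omega
        · obtain ⟨e1, b1⟩ := hwge i hpi2 hi
          have hmono : s ⟨(j : ℕ) + 1, hpj2⟩ ≤ s ⟨(i : ℕ) + 1, hpi2⟩ :=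
            hdec ⟨(i : ℕ) + 1, hpi2⟩ ⟨(j : ℕ) + 1, hpj2⟩ (show t ≤ (i : ℕ) + 1 by omega)
              (show (i : ℕ) + 1 ≤ (j : ℕ) + 1 by omega)
          omega
    have hwb : ∀ i, w i ≤ 2 * k := by
      intro i
      have hpi : (i : ℕ) < n + 1 := by have := i.2; omega
      have hpi2 : (i : ℕ) + 1 < n + 1 := by have := i.2; omega
      rcases Nat.lt_or_ge (i : ℕ) t with hi | hi
      · have e1 := hwlt i hpi hi
        have b1 := hbd ⟨(i : ℕ), hpi⟩
        omega
      · obtain ⟨e1, b1⟩ := hwge i hpi2 hi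
        have c1 := hpos ⟨(i : ℕ) + 1, hpi2⟩
        omega
    have htw : tw k w = t := by
      have hcar : ∀ i : Fin n, (i : ℕ) < tw k w ↔ w i ≤ k := tw_lt_iff hwm
      have htwn : tw k w ≤ n := tw_le w
      by_contra hne
      rcases Nat.lt_or_ge (tw k w) t with hlt | hge
      · have hpf0 : tw k w < n := by omega
        have hpf1 : tw k w < n + 1 := by omega
        have e1 : w ⟨tw k w, hpf0⟩ = s ⟨tw k w, hpf1⟩ - 1 := hwlt ⟨tw k w, hpf0⟩ hpf1 hlt
        have b1 := hbd ⟨tw k w, hpf1⟩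
        have h7 : w ⟨tw k w, hpf0⟩ ≤ k := by omega
        have h8 : tw k w < tw k w := (hcar ⟨tw k w, hpf0⟩).mpr h7
        omega
      · have hlt : t < tw k w := by omega
        have hpf0 : t < n := by omega
        have hpf2 : t + 1 < n + 1 := by omega
        obtain ⟨e1, b1⟩ := hwge ⟨t, hpf0⟩ hpf2 (le_refl t)
        have h7 : w ⟨t, hpf0⟩ ≤ k := (hcar ⟨t, hpf0⟩).mp hlt
        have c1 := hpos ⟨t + 1, hpf2⟩
        omega
    refine ⟨⟨w, hwm, hwb⟩, ?_⟩
    apply Subtype.ext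
    show gfun n k (tw k w) w = s
    rw [htw]
    funext j
    have hpj1 : (j : ℕ) < n + 1 := j.2
    rcases Nat.lt_trichotomy (j : ℕ) t with hj | hj | hj
    · have hjn : (j : ℕ) < n := by omega
      have e1 : gfun n k t w j = w ⟨(j : ℕ), hjn⟩ + 1 := gfun_lt hj hjn
      have e2 : w ⟨(j : ℕ), hjn⟩ = s j - 1 := hwlt ⟨(j : ℕ), hjn⟩ hpj1 hj
      have c1 := hpos j
      omega
    · have e1 : gfun n k t w j = k + 1 := gfun_eq hj
      have e2 : s j = k + 1 := by
        rw [show j = tF from Fin.ext hj]; exact hts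
      omega
    · have hjm : (j : ℕ) - 1 < n := by omega
      have e1 : gfun n k t w j = 2 * k + 1 - w ⟨(j : ℕ) - 1, hjm⟩ := gfun_gt hj
      have hpp : ((⟨(j : ℕ) - 1, hjm⟩ : Fin n) : ℕ) + 1 < n + 1 := by omega
      obtain ⟨e2, b2⟩ := hwge ⟨(j : ℕ) - 1, hjm⟩ hpp (show t ≤ (j : ℕ) - 1 by omega)
      have e3 : s ⟨((⟨(j : ℕ) - 1, hjm⟩ : Fin n) : ℕ) + 1, hpp⟩ = s j :=
        congrArg s (Fin.ext (show (j : ℕ) - 1 + 1 = (j : ℕ) by omega))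
      have b4 := hbd j
      omega

/-- The generating function `V(x,y) = ∑_{n,k ≥ 1} V_{n,k} xⁿ yᵏ`; the variable `x` is
indexed by `0` and `y` by `1`. -/
noncomputable def Vgf : MvPowerSeries (Fin 2) ℚ :=
  fun d => if 1 ≤ d 0 ∧ 1 ≤ d 1 then (Vnk (d 0) (d 1) : ℚ) else 0

lemma coeff_Vgf (d : Fin 2 →₀ ℕ) :
    coeff d Vgf = if 1 ≤ d 0 ∧ 1 ≤ d 1 then (Vnk (d 0) (d 1) : ℚ) else 0 := rfl

lemma pascal2 (m j : ℕ) :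
    (m + 2).choose (j + 2) + m.choose j = 2 * (m + 1).choose (j + 1) + m.choose (j + 2) := by
  rw [show m + 2 = m + 1 + 1 by ring, show j + 2 = j + 1 + 1 by ring]
  simp [Nat.choose_succ_succ]
  omega

lemma key_nat (a b : ℕ) :
    ((((if 1 ≤ a ∧ 1 ≤ b then (Vnk a b : ℚ) else 0) -
          if 1 ≤ a then if 1 ≤ a - 1 ∧ 1 ≤ b then (Vnk (a - 1) b : ℚ) else 0 else 0) -
        if 1 ≤ a then if 1 ≤ a - 1 ∧ 1 ≤ b then (Vnk (a - 1) b : ℚ) else 0 else 0) +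
      if 2 ≤ a then if 1 ≤ a - 2 ∧ 1 ≤ b then (Vnk (a - 2) b : ℚ) else 0 else 0) =
    ((if a = 1 ∧ b = 1 then (1 : ℚ) else 0) - if a = 2 ∧ b = 1 then (1 : ℚ) else 0) +
      if 1 ≤ b then if 1 ≤ a ∧ 1 ≤ b - 1 then (Vnk a (b - 1) : ℚ) else 0 else 0 := by
  have V1 : ∀ B : ℕ, Vnk 1 (B + 1) = 1 := fun B => by simpa using Vnk_succ_succ 0 B
  have V2 : ∀ B : ℕ, Vnk 2 (B + 1) = 2 * B + 1 := fun B => by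
    have h := Vnk_succ_succ 1 B
    rw [Nat.choose_one_right] at h
    norm_num at h
    omega
  have VA : ∀ A B : ℕ, Vnk (A + 3) (B + 1) = (A + 2 * B + 2).choose (A + 2) := fun A B => by
    have h := Vnk_succ_succ (A + 2) B
    rw [show A + 2 + 2 * B = A + 2 * B + 2 by ring] at h
    rw [show A + 3 = A + 2 + 1 by ring]
    exact h
  have VA2 : ∀ A B : ℕ, Vnk (A + 2) (B + 1) = (A + 2 * B + 1).choose (A + 1) := fun A B => by
    have h := Vnk_succ_succ (A + 1) B
    rw [show A + 1 + 2 * B = A + 2 * B + 1 by ring] at h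
    rw [show A + 2 = A + 1 + 1 by ring]
    exact h
  have VA1 : ∀ A B : ℕ, Vnk (A + 1) (B + 1) = (A + 2 * B).choose A := Vnk_succ_succ
  rcases b with _ | B
  · norm_num
  rcases a with _ | _ | _ | A
  · norm_num
  · -- a = 1
    rcases B with _ | B
    · have h1 : Vnk 1 1 = 1 := by simpa using V1 0
      norm_num [h1]
    · have h1 : Vnk 1 (B + 2) = 1 := by rw [show B + 2 = B + 1 + 1 by ring]; exact V1 (B + 1)
      have h2 : Vnk 1 (B + 1) = 1 := V1 B
      norm_num [h1, h2]
  · -- a = 2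
    rcases B with _ | B
    · have h1 : Vnk 2 1 = 1 := by simpa using V2 0
      have h2 : Vnk 1 1 = 1 := by simpa using V1 0
      norm_num [h1, h2]
    · have h1 : Vnk 2 (B + 2) = 2 * B + 3 := by
        rw [show B + 2 = B + 1 + 1 by ring, V2 (B + 1)]; ring
      have h2 : Vnk 1 (B + 2) = 1 := by rw [show B + 2 = B + 1 + 1 by ring]; exact V1 (B + 1)
      have h3 : Vnk 2 (B + 1) = 2 * B + 1 := V2 B
      norm_num [h1, h2, h3]
      push_cast
      ring
  · -- a = A + 3
    have e1 : A + 3 - 1 = A + 2 := by omega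
    have e2 : A + 3 - 2 = A + 1 := by omega
    rcases B with _ | B
    · have h1 : Vnk (A + 3) 1 = 1 := by
        have := VA A 0; simpa [Nat.choose_self] using this
      have h2 : Vnk (A + 2) 1 = 1 := by
        have := VA2 A 0; simpa [Nat.choose_self] using this
      have h3 : Vnk (A + 1) 1 = 1 := by
        have := VA1 A 0; simpa [Nat.choose_self] using this
      norm_num [e1, e2, h1, h2, h3]
      omega
    · have h1 : Vnk (A + 3) (B + 2) = (A + 2 * B + 4).choose (A + 2) := by
        rw [show B + 2 = B + 1 + 1 by ring, VA A (B + 1)]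
        congr 1 <;> omega
      have h2 : Vnk (A + 2) (B + 2) = (A + 2 * B + 3).choose (A + 1) := by
        rw [show B + 2 = B + 1 + 1 by ring, VA2 A (B + 1)]
        congr 1 <;> omega
      have h3 : Vnk (A + 1) (B + 2) = (A + 2 * B + 2).choose A := by
        rw [show B + 2 = B + 1 + 1 by ring, VA1 A (B + 1)]
        congr 1 <;> omega
      have h4 : Vnk (A + 3) (B + 1) = (A + 2 * B + 2).choose (A + 2) := VA A B
      have hp : (A + 2 * B + 4).choose (A + 2) + (A + 2 * B + 2).choose A
          = 2 * (A + 2 * B + 3).choose (A + 1) + (A + 2 * B + 2).choose (A + 2) := by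
        have := pascal2 (A + 2 * B + 2) A
        rw [show A + 2 * B + 2 + 2 = A + 2 * B + 4 by ring,
          show A + 2 * B + 2 + 1 = A + 2 * B + 3 by ring] at this
        exact this
      norm_num [e1, e2, h1, h2, h3, h4]
      push_cast
      have hq : ((A + 2 * B + 4).choose (A + 2) : ℚ) + (A + 2 * B + 2).choose A
          = 2 * (A + 2 * B + 3).choose (A + 1) + (A + 2 * B + 2).choose (A + 2) := by
        exact_mod_cast hp
      linarith

lemma finsupp_fin2_eq (d e : Fin 2 →₀ ℕ) : d = e ↔ d 0 = e 0 ∧ d 1 = e 1 := by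
  constructor
  · rintro rfl; exact ⟨rfl, rfl⟩
  · rintro ⟨h0, h1⟩
    ext i
    fin_cases i <;> assumption

lemma M1 : Vgf * (1 - X 0 : MvPowerSeries (Fin 2) ℚ) ^ 2 = X 0 * X 1 * (1 - X 0) + X 1 * Vgf := by
  apply MvPowerSeries.ext
  intro d
  have e00 : (X 0 * X 0 : MvPowerSeries (Fin 2) ℚ)
      = monomial (Finsupp.single 0 1 + Finsupp.single 0 1) 1 := by
    rw [X_def, monomial_mul_monomial, one_mul]
  have e01 : (X 0 * X 1 : MvPowerSeries (Fin 2) ℚ)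
      = monomial (Finsupp.single 0 1 + Finsupp.single 1 1) 1 := by
    rw [X_def 0, X_def 1, monomial_mul_monomial, one_mul]
  have e010 : (X 0 * X 1 * X 0 : MvPowerSeries (Fin 2) ℚ)
      = monomial (Finsupp.single 0 1 + Finsupp.single 1 1 + Finsupp.single 0 1) 1 := by
    rw [e01, X_def 0, monomial_mul_monomial, one_mul]
  have h1 : Vgf * (1 - X 0 : MvPowerSeries (Fin 2) ℚ) ^ 2
      = Vgf - Vgf * monomial (Finsupp.single 0 1) 1 - Vgf * monomial (Finsupp.single 0 1) 1
        + Vgf * monomial (Finsupp.single 0 1 + Finsupp.single 0 1) 1 := by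
    rw [← e00, ← X_def 0]
    ring
  have h2 : (X 0 * X 1 * (1 - X 0) + X 1 * Vgf : MvPowerSeries (Fin 2) ℚ)
      = monomial (Finsupp.single 0 1 + Finsupp.single 1 1) 1
        - monomial (Finsupp.single 0 1 + Finsupp.single 1 1 + Finsupp.single 0 1) 1
        + monomial (Finsupp.single 1 1) 1 * Vgf := by
    rw [← e01, ← e010, ← X_def 1]
    ring
  rw [h1, h2, map_add, map_sub, map_sub, map_add, map_sub]
  simp only [coeff_mul_monomial, coeff_monomial_mul, coeff_monomial]
  simp only [coeff_Vgf, Finsupp.tsub_apply, ← Finsupp.single_add, Finsupp.single_le_iff,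
    finsupp_fin2_eq, Finsupp.add_apply, Finsupp.single_apply, mul_one, one_mul]
  norm_num
  exact key_nat (d 0) (d 1)

/-- `V(x,y) = xy/(1-x) + y·V(x,y)/(1-x)² `, hence `V(x,y) = xy/(1 - x - y/(1-x))`. -/
theorem valleyless_gf_functional_equation :
    Vgf = X 0 * X 1 * ((1 - X 0 : MvPowerSeries (Fin 2) ℚ))⁻¹ +
        X 1 * Vgf * (((1 - X 0 : MvPowerSeries (Fin 2) ℚ)) ^ 2)⁻¹ ∧
      Vgf = X 0 * X 1 *
        ((1 - X 0 - X 1 * ((1 - X 0 : MvPowerSeries (Fin 2) ℚ))⁻¹))⁻¹ := by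
  have hA0 : constantCoeff ((1 - X 0 : MvPowerSeries (Fin 2) ℚ)) ≠ 0 := by
    rw [map_sub, constantCoeff_one, constantCoeff_X]
    norm_num
  have hA2 : constantCoeff (((1 - X 0 : MvPowerSeries (Fin 2) ℚ)) ^ 2) ≠ 0 := by
    rw [map_pow, map_sub, constantCoeff_one, constantCoeff_X]
    norm_num
  have hcanc : (1 - X 0 : MvPowerSeries (Fin 2) ℚ) * (1 - X 0 : MvPowerSeries (Fin 2) ℚ)⁻¹ = 1 :=
    MvPowerSeries.mul_inv_cancel _ hA0
  have hc2 : ((1 - X 0 : MvPowerSeries (Fin 2) ℚ) ^ 2) *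
      ((1 - X 0 : MvPowerSeries (Fin 2) ℚ) ^ 2)⁻¹ = 1 :=
    MvPowerSeries.mul_inv_cancel _ hA2
  constructor
  · linear_combination (((1 - X 0 : MvPowerSeries (Fin 2) ℚ) ^ 2)⁻¹) * M1
      + (X 0 * X 1 * ((1 - X 0 : MvPowerSeries (Fin 2) ℚ))⁻¹ - Vgf) * hc2
      - X 0 * X 1 * (1 - X 0) * (((1 - X 0 : MvPowerSeries (Fin 2) ℚ)) ^ 2)⁻¹ * hcanc
  · have hB : constantCoeff
        (1 - X 0 - X 1 * ((1 - X 0 : MvPowerSeries (Fin 2) ℚ))⁻¹) ≠ 0 := by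
      rw [map_sub, map_sub, map_mul, constantCoeff_one, constantCoeff_X, constantCoeff_X]
      norm_num
    rw [MvPowerSeries.eq_mul_inv_iff_mul_eq hB]
    linear_combination (((1 - X 0 : MvPowerSeries (Fin 2) ℚ))⁻¹) * M1
      + (X 0 * X 1 - Vgf * (1 - X 0)) * hcanc
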